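/- Let 0 < λ < n. The Hardy–Littlewood maximal operator is bounded on the Zygmund–Morrey space M_{L(1+log⁺L),λ}(ℝⁿ) restricted to radially decreasing functions: there is c > 0 such that ‖Mf‖_{M_{L(1+log⁺L),λ}} ≤ c ‖f‖_{M_{L(1+log⁺L),λ}} for all radially decreasing measurable f on ℝⁿ. -/

import Mathlib

open MeasureTheory ENNReal Set

noncomputable section

/-- `ℝⁿ` with the Euclidean metric. -/
abbrev Rn (n : ℕ) : Type := EuclideanSpace ℝ (Fin n)

/-- The axis-parallel cube with center `c` and side length `h`. -/
def zCube {n : ℕ} (c : Rn n) (h : ℝ) : Set (Rn n) := {x | ∀ i, |x i - c i| ≤ h / 2}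

/-- `log⁺ t = max (log t) 0`. -/
def logPlus (t : ℝ) : ℝ := max (Real.log t) 0

/-- The Hardy–Littlewood maximal operator of an `ℝ≥0∞`-valued function:
`sup_{Q ∋ x} |Q|⁻¹ ∫_Q g`, the supremum over all axis-parallel cubes containing `x`. -/
def maxE {n : ℕ} (g : Rn n → ℝ≥0∞) (x : Rn n) : ℝ≥0∞ :=
  ⨆ (c : Rn n) (h : ℝ) (_ : 0 < h) (_ : x ∈ zCube c h),
    (ENNReal.ofReal (h ^ n))⁻¹ * ∫⁻ y in zCube c h, g y

/-- The Hardy–Littlewood maximal operator of a real function. -/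
def HLM {n : ℕ} (f : Rn n → ℝ) (x : Rn n) : ℝ≥0∞ :=
  maxE (fun y => ENNReal.ofReal |f y|) x

/-- The fractional maximal operator `M_α` applied to an `ℝ≥0∞`-valued function:
`sup_{Q ∋ x} |Q|^{(α-n)/n} ∫_Q g`. -/
def fracMaxE {n : ℕ} (α : ℝ) (g : Rn n → ℝ≥0∞) (x : Rn n) : ℝ≥0∞ :=
  ⨆ (c : Rn n) (h : ℝ) (_ : 0 < h) (_ : x ∈ zCube c h),
    ENNReal.ofReal (h ^ (α - (n : ℝ))) * ∫⁻ y in zCube c h, g y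

/-- The maximal commutator `C_b(f)(x) = sup_{Q ∋ x} |Q|⁻¹ ∫_Q |b x - b y| |f y| dy`. -/
def maxComm {n : ℕ} (b f : Rn n → ℝ) (x : Rn n) : ℝ≥0∞ :=
  ⨆ (c : Rn n) (h : ℝ) (_ : 0 < h) (_ : x ∈ zCube c h),
    (ENNReal.ofReal (h ^ n))⁻¹ * ∫⁻ y in zCube c h, ENNReal.ofReal (|b x - b y| * |f y|)

/-- The mean value `f_Q = |Q|⁻¹ ∫_Q f` of `f` over the cube with center `c`, side `h`. -/
def cubeMean {n : ℕ} (f : Rn n → ℝ) (c : Rn n) (h : ℝ) : ℝ :=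
  (h ^ n)⁻¹ * ∫ y in zCube c h, f y

/-- The mean oscillation `|Q|⁻¹ ∫_Q |b - b_Q|` of `b` over a cube. -/
def oscAvg {n : ℕ} (b : Rn n → ℝ) (c : Rn n) (h : ℝ) : ℝ≥0∞ :=
  (ENNReal.ofReal (h ^ n))⁻¹ * ∫⁻ y in zCube c h, ENNReal.ofReal |b y - cubeMean b c h|

/-- The BMO seminorm `‖b‖_* = sup_Q |Q|⁻¹ ∫_Q |b - b_Q|`. -/
def bmoNorm {n : ℕ} (b : Rn n → ℝ) : ℝ≥0∞ :=
  ⨆ (c : Rn n) (h : ℝ) (_ : 0 < h), oscAvg b c h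

/-- Morrey norm `‖g‖_{M_{p,λ}} = sup_{x, r>0} r^{(λ-n)/p} (∫_{B(x,r)} g^p)^{1/p}`
for an `ℝ≥0∞`-valued function. -/
def morreyE {n : ℕ} (p lam : ℝ) (g : Rn n → ℝ≥0∞) : ℝ≥0∞ :=
  ⨆ (x : Rn n) (r : ℝ) (_ : 0 < r),
    ENNReal.ofReal (r ^ ((lam - n) / p)) * (∫⁻ y in Metric.ball x r, g y ^ p) ^ (1 / p)

/-- Morrey norm of a real function. -/
def morrey {n : ℕ} (p lam : ℝ) (f : Rn n → ℝ) : ℝ≥0∞ :=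
  morreyE p lam (fun y => ENNReal.ofReal |f y|)

/-- The Zygmund function `Φ(t) = t (1 + log⁺ t)`, extended to `ℝ≥0∞`. -/
def zygFnE (t : ℝ≥0∞) : ℝ≥0∞ := t * (1 + ENNReal.ofReal (logPlus t.toReal))

/-- The Luxemburg-type `L(1+log⁺L)`-average of `g` over a cube:
`inf {α > 0 : |Q|⁻¹ ∫_Q Φ(g/α) ≤ 1}` (as an element of `ℝ≥0∞`, `= ∞` if no such `α`). -/
def zygAvgE {n : ℕ} (g : Rn n → ℝ≥0∞) (c : Rn n) (h : ℝ) : ℝ≥0∞ :=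
  sInf {a : ℝ≥0∞ | ∃ α : ℝ, 0 < α ∧ a = ENNReal.ofReal α ∧
    (ENNReal.ofReal (h ^ n))⁻¹ * ∫⁻ y in zCube c h, zygFnE (g y / ENNReal.ofReal α) ≤ 1}

/-- The `L(1+log⁺L)`-average of a real function over a cube. -/
def zygAvg {n : ℕ} (f : Rn n → ℝ) (c : Rn n) (h : ℝ) : ℝ≥0∞ :=
  zygAvgE (fun y => ENNReal.ofReal |f y|) c h

/-- The weak `L(1+log⁺L)`-average of `g` over a cube:
`inf {α > 0 : ∀ t > 0, |Q|⁻¹ |{x ∈ Q : g x > α t}| ≤ (1/t)(1 + log⁺(1/t))}`. -/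
def weakZygAvgE {n : ℕ} (g : Rn n → ℝ≥0∞) (c : Rn n) (h : ℝ) : ℝ≥0∞ :=
  sInf {a : ℝ≥0∞ | ∃ α : ℝ, 0 < α ∧ a = ENNReal.ofReal α ∧ ∀ t : ℝ, 0 < t →
    (ENNReal.ofReal (h ^ n))⁻¹ * volume {x ∈ zCube c h | ENNReal.ofReal (α * t) < g x}
      ≤ ENNReal.ofReal ((1 / t) * (1 + logPlus (1 / t)))}

/-- The Zygmund–Morrey norm `sup_Q |Q|^{λ/n} ‖g‖_{L(1+log⁺L),Q}` of an `ℝ≥0∞`-valued function. -/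
def zygMorreyE {n : ℕ} (lam : ℝ) (g : Rn n → ℝ≥0∞) : ℝ≥0∞ :=
  ⨆ (c : Rn n) (h : ℝ) (_ : 0 < h), ENNReal.ofReal (h ^ lam) * zygAvgE g c h

/-- The Zygmund–Morrey norm of a real function. -/
def zygMorrey {n : ℕ} (lam : ℝ) (f : Rn n → ℝ) : ℝ≥0∞ :=
  zygMorreyE lam (fun y => ENNReal.ofReal |f y|)

/-- The weak Zygmund–Morrey norm `sup_Q |Q|^{λ/n} ‖g‖_{WL(1+log⁺L),Q}`. -/
def weakZygMorreyE {n : ℕ} (lam : ℝ) (g : Rn n → ℝ≥0∞) : ℝ≥0∞ :=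
  ⨆ (c : Rn n) (h : ℝ) (_ : 0 < h), ENNReal.ofReal (h ^ lam) * weakZygAvgE g c h

/-- The commutator `[M,b]f(x) = M(bf)(x) - b(x) Mf(x)`. -/
def commMb {n : ℕ} (b f : Rn n → ℝ) (x : Rn n) : ℝ :=
  (HLM (fun y => b y * f y) x).toReal - b x * (HLM f x).toReal

/-- `f` is radially decreasing: `f x = φ ‖x‖` with `φ` nonnegative and
nonincreasing on `(0,∞)`, measurable. -/
def RadDec {n : ℕ} (f : Rn n → ℝ) : Prop :=
  ∃ φ : ℝ → ℝ, Measurable φ ∧ (∀ r : ℝ, 0 < r → 0 ≤ φ r) ∧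
    AntitoneOn φ (Set.Ioi 0) ∧ ∀ x, f x = φ ‖x‖

/-- `∫_Q |f| (1 + log⁺(|f| / |f|_Q))`. -/
def zygInt {n : ℕ} (f : Rn n → ℝ) (c : Rn n) (h : ℝ) : ℝ≥0∞ :=
  ∫⁻ y in zCube c h,
    ENNReal.ofReal (|f y| * (1 + logPlus (|f y| / cubeMean (fun z => |f z|) c h)))

/-- `∫_0^t φ(ρ) ρ^{n-1} dρ`. -/
def radInt1 (n : ℕ) (φ : ℝ → ℝ) (t : ℝ) : ℝ≥0∞ :=
  ∫⁻ ρ in Set.Ioc (0 : ℝ) t, ENNReal.ofReal (φ ρ * ρ ^ (n - 1))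

/-- `∫_0^x (1/t) ∫_0^t φ(ρ) ρ^{n-1} dρ dt`. -/
def radInt2 (n : ℕ) (φ : ℝ → ℝ) (x : ℝ) : ℝ≥0∞ :=
  ∫⁻ t in Set.Ioc (0 : ℝ) x, (ENNReal.ofReal t)⁻¹ * radInt1 n φ t

/-- `∫_0^x (1/y) ∫_0^y (1/t) ∫_0^t φ(ρ) ρ^{n-1} dρ dt dy`. -/
def radInt3 (n : ℕ) (φ : ℝ → ℝ) (x : ℝ) : ℝ≥0∞ :=
  ∫⁻ y in Set.Ioc (0 : ℝ) x, (ENNReal.ofReal y)⁻¹ * radInt2 n φ y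

/-- `sup_{x>0} x^{λ-n} ∫_0^x (1/t) ∫_0^t φ(ρ) ρ^{n-1} dρ dt`. -/
def radSup2 (n : ℕ) (lam : ℝ) (φ : ℝ → ℝ) : ℝ≥0∞ :=
  ⨆ (x : ℝ) (_ : 0 < x), ENNReal.ofReal (x ^ (lam - (n : ℝ))) * radInt2 n φ x

/-- `sup_{x>0} x^{λ-n} ∫_0^x (1/y) ∫_0^y (1/t) ∫_0^t φ(ρ) ρ^{n-1} dρ dt dy`. -/
def radSup3 (n : ℕ) (lam : ℝ) (φ : ℝ → ℝ) : ℝ≥0∞ :=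
  ⨆ (x : ℝ) (_ : 0 < x), ENNReal.ofReal (x ^ (lam - (n : ℝ))) * radInt3 n φ x


lemma zCube_eq {n : ℕ} (c : Rn n) (h : ℝ) :
    zCube c h = ((MeasurableEquiv.toLp 2 (Fin n → ℝ)).symm)⁻¹'
      (Set.univ.pi fun i => Icc (c i - h/2) (c i + h/2)) := by
  ext x
  simp only [zCube, mem_setOf_eq, mem_preimage, mem_pi, mem_univ, forall_true_left, mem_Icc]
  constructor
  · intro H i
    have h2 := abs_le.1 (H i)
    show c i - h/2 ≤ x i ∧ x i ≤ c i + h/2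
    constructor <;> linarith [h2.1, h2.2]
  · intro H i
    have h2 : c i - h/2 ≤ x i ∧ x i ≤ c i + h/2 := H i
    rw [abs_le]; constructor <;> linarith [h2.1, h2.2]

lemma measurableSet_zCube {n : ℕ} (c : Rn n) (h : ℝ) : MeasurableSet (zCube c h) := by
  rw [zCube_eq]
  exact ((MeasurableEquiv.toLp 2 (Fin n → ℝ)).symm).measurable
    (MeasurableSet.univ_pi fun i => measurableSet_Icc)

lemma volume_zCube {n : ℕ} (c : Rn n) (h : ℝ) (hh : 0 ≤ h) :
    volume (zCube c h) = ENNReal.ofReal (h ^ n) := by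
  rw [zCube_eq,
    (EuclideanSpace.volume_preserving_symm_measurableEquiv_toLp (Fin n)).measure_preimage
      (MeasurableSet.univ_pi fun i => measurableSet_Icc).nullMeasurableSet,
    volume_pi_pi]
  have : ∀ i : Fin n, volume (Icc (c i - h/2) (c i + h/2)) = ENNReal.ofReal h := by
    intro i; rw [Real.volume_Icc]; ring_nf
  simp only [this, Finset.prod_const, Finset.card_univ, Fintype.card_fin]
  rw [← ENNReal.ofReal_pow hh]

lemma abs_coord_le_norm {n : ℕ} (v : Rn n) (i : Fin n) : |v i| ≤ ‖v‖ := by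
  have := EuclideanSpace.norm_eq v
  rw [this]
  have h1 : |v i| = Real.sqrt (‖v i‖ ^ 2) := by
    rw [Real.sqrt_sq_eq_abs]; simp
  rw [h1]
  apply Real.sqrt_le_sqrt
  exact Finset.single_le_sum (f := fun j => ‖v j‖^2) (fun j _ => sq_nonneg _) (Finset.mem_univ i)

lemma norm_le_of_coords {n : ℕ} (v : Rn n) (M : ℝ) (hM : 0 ≤ M) (hc : ∀ i, |v i| ≤ M) :
    ‖v‖ ≤ Real.sqrt n * M := by
  rw [EuclideanSpace.norm_eq]
  have : ∑ i, ‖v i‖ ^ 2 ≤ (n : ℝ) * M ^ 2 := by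
    calc ∑ i, ‖v i‖ ^ 2 ≤ ∑ _i : Fin n, M ^ 2 := by
          apply Finset.sum_le_sum; intro i _
          have := hc i
          rw [Real.norm_eq_abs]
          nlinarith [abs_nonneg (v i)]
          
      _ = (n : ℝ) * M ^ 2 := by simp [Finset.sum_const, mul_comm]
  calc Real.sqrt (∑ i, ‖v i‖ ^ 2) ≤ Real.sqrt ((n:ℝ) * M^2) := Real.sqrt_le_sqrt this
    _ = Real.sqrt n * M := by
        rw [Real.sqrt_mul (Nat.cast_nonneg n), Real.sqrt_sq hM]

lemma logPlus_nonneg (t : ℝ) : 0 ≤ logPlus t := le_max_right _ _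

lemma logPlus_mono {u v : ℝ} (hu : 0 ≤ u) (huv : u ≤ v) : logPlus u ≤ logPlus v := by
  unfold logPlus
  rcases eq_or_lt_of_le hu with h|h
  · simp [← h, Real.log_zero]
  · exact max_le_max (Real.log_le_log h huv) le_rfl

lemma logPlus_of_le_one {t : ℝ} (ht0 : 0 ≤ t) (ht : t ≤ 1) : logPlus t = 0 :=
  max_eq_right (Real.log_nonpos ht0 ht)

lemma logPlus_rpow {t lam : ℝ} (ht : 0 < t) (hl : 0 < lam) :
    logPlus (t ^ lam) = lam * logPlus t := by
  unfold logPlus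
  rw [Real.log_rpow ht]
  rcases le_or_gt (Real.log t) 0 with h|h
  · rw [max_eq_right h, max_eq_right (by nlinarith), mul_zero]
  · rw [max_eq_left h.le, max_eq_left (by nlinarith)]

lemma zygFnE_le_self_mul {t : ℝ≥0∞} : t ≤ zygFnE t := by
  unfold zygFnE
  calc t = t * 1 := (mul_one t).symm
    _ ≤ _ := mul_le_mul_right le_self_add t

lemma zygFnE_mono : Monotone zygFnE := by
  intro s t hst
  unfold zygFnE
  rcases eq_or_ne t ⊤ with rfl|ht
  · rcases eq_or_ne s ⊤ with rfl|hs
    · exact le_rfl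
    · exact le_top.trans_eq (by simp)
  · have hs : s ≠ ⊤ := ne_top_of_le_ne_top ht hst
    apply mul_le_mul' hst
    apply add_le_add_right
    apply ENNReal.ofReal_le_ofReal
    exact logPlus_mono ENNReal.toReal_nonneg (ENNReal.toReal_mono ht hst)

lemma zygFnE_ofReal {u : ℝ} (hu : 0 ≤ u) :
    zygFnE (ENNReal.ofReal u) = ENNReal.ofReal (u * (1 + logPlus u)) := by
  unfold zygFnE
  rw [ENNReal.toReal_ofReal hu, ENNReal.ofReal_mul hu, ENNReal.ofReal_add zero_le_one (logPlus_nonneg u), ENNReal.ofReal_one]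

lemma zygAvgE_le {n : ℕ} {g : Rn n → ℝ≥0∞} {c : Rn n} {h α : ℝ} (hα : 0 < α)
    (hcond : (ENNReal.ofReal (h ^ n))⁻¹ * ∫⁻ y in zCube c h, zygFnE (g y / ENNReal.ofReal α) ≤ 1) :
    zygAvgE g c h ≤ ENNReal.ofReal α :=
  sInf_le ⟨α, hα, rfl, hcond⟩

lemma avg_le_zygAvgE {n : ℕ} (g : Rn n → ℝ≥0∞) (c : Rn n) {h : ℝ} (hh : 0 < h) :
    (ENNReal.ofReal (h ^ n))⁻¹ * ∫⁻ y in zCube c h, g y ≤ zygAvgE g c h := by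
  apply le_sInf
  rintro a ⟨α, hα, rfl, hcond⟩
  have hαe : (0:ℝ≥0∞) < ENNReal.ofReal α := ENNReal.ofReal_pos.2 hα
  have h1 : (ENNReal.ofReal (h ^ n))⁻¹ * ∫⁻ y in zCube c h, g y / ENNReal.ofReal α ≤ 1 := by
    refine le_trans ?_ hcond
    exact mul_le_mul_right (lintegral_mono fun y => zygFnE_le_self_mul) _
  have h2 : ∫⁻ y in zCube c h, g y / ENNReal.ofReal α
      = (∫⁻ y in zCube c h, g y) * (ENNReal.ofReal α)⁻¹ := by
    simp_rw [div_eq_mul_inv]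
    exact lintegral_mul_const' _ _ (ENNReal.inv_ne_top.2 (ne_of_gt hαe))
  rw [h2, ← mul_assoc] at h1
  have h3 := mul_le_mul_left h1 (ENNReal.ofReal α)
  rwa [one_mul, mul_assoc, ENNReal.inv_mul_cancel (ne_of_gt hαe) ENNReal.ofReal_ne_top,
    mul_one] at h3

lemma volume_singleton_zero {n : ℕ} (hn : 0 < n) : volume ({0} : Set (Rn n)) = 0 := by
  haveI : Nonempty (Fin n) := ⟨⟨0, hn⟩⟩
  exact measure_singleton 0

lemma cube_avg_le_morrey {n : ℕ} (lam : ℝ) (hlam0 : 0 < lam) (g : Rn n → ℝ≥0∞) {t : ℝ} (ht : 0 < t) :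
    (ENNReal.ofReal (t ^ n))⁻¹ * ∫⁻ y in zCube 0 t, g y
      ≤ ENNReal.ofReal (t ^ (-lam)) * zygMorreyE lam g := by
  have ha0 : ENNReal.ofReal (t ^ lam) ≠ 0 :=
    (ENNReal.ofReal_pos.2 (Real.rpow_pos_of_pos ht lam)).ne'
  have h1 : ENNReal.ofReal (t ^ lam) * zygAvgE g 0 t ≤ zygMorreyE lam g :=
    le_iSup_of_le 0 (le_iSup_of_le t (le_iSup_of_le ht le_rfl))
  have h2 := avg_le_zygAvgE g 0 ht
  have h3 : ENNReal.ofReal (t ^ lam) * ((ENNReal.ofReal (t ^ n))⁻¹ * ∫⁻ y in zCube 0 t, g y)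
      ≤ zygMorreyE lam g := le_trans (mul_le_mul_right h2 _) h1
  have h4 := mul_le_mul_right h3 (ENNReal.ofReal (t ^ lam))⁻¹
  rw [← mul_assoc, ENNReal.inv_mul_cancel ha0 ENNReal.ofReal_ne_top, one_mul] at h4
  refine h4.trans_eq ?_
  congr 1
  rw [Real.rpow_neg ht.le, ENNReal.ofReal_inv_of_pos (Real.rpow_pos_of_pos ht lam)]

lemma hlm_pointwise {n : ℕ} (hn : 0 < n) (lam : ℝ) (hlam0 : 0 < lam)
    (f : Rn n → ℝ) (hf : RadDec f) {x : Rn n} (hx : x ≠ 0) :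
    HLM f x ≤ ENNReal.ofReal ((6 * Real.sqrt n) ^ n * (2 * Real.sqrt n) ^ lam * ‖x‖ ^ (-lam))
        * zygMorrey lam f := by
  obtain ⟨φ, hφm, hφnn, hφanti, hφeq⟩ := hf
  set sn := Real.sqrt n with hsn
  have hsn1 : 1 ≤ sn := by
    rw [hsn]
    have : (1:ℝ) ≤ (n:ℝ) := by exact_mod_cast hn
    nlinarith [Real.sq_sqrt (by positivity : (0:ℝ) ≤ (n:ℝ)), Real.sqrt_nonneg (n:ℝ)]
  have hs : 0 < ‖x‖ := norm_pos_iff.2 hx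
  set s := ‖x‖ with hsdef
  set g : Rn n → ℝ≥0∞ := fun y => ENNReal.ofReal |f y| with hg
  set M := zygMorrey lam f with hM
  set κs := s / (2 * sn) with hκs
  have hκpos : 0 < κs := by positivity
  -- reduce target
  have key : HLM f x ≤ ENNReal.ofReal ((6 * sn) ^ n) * (ENNReal.ofReal (κs ^ (-lam)) * M) := by
    apply iSup_le; intro c; apply iSup_le; intro h; apply iSup_le; intro hh; apply iSup_le
    intro hxQ
    have hxQ' : ∀ i, |x i - c i| ≤ h / 2 := hxQ
    by_cases hcase : s ≤ 2 * sn * h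
    · -- big cube case
      set T := 2 * s + (sn + 1) * h with hT
      have hTpos : 0 < T := by positivity
      have hT6 : T ≤ 6 * sn * h := by nlinarith
      have hTκ : κs ≤ T := by
        rw [hκs, div_le_iff₀ (by positivity)]
        nlinarith
      have hsub : zCube c h ⊆ zCube 0 T := by
        intro y hy
        intro i
        have h1 : |y i - c i| ≤ h / 2 := hy i
        have h2 : |x i - c i| ≤ h / 2 := hxQ' i
        have h3 : |x i| ≤ s := abs_coord_le_norm x i
        have h0 : (0 : Rn n) i = 0 := rfl
        rw [h0, sub_zero]
        have : |y i| ≤ h + s := by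
          have := abs_sub_abs_le_abs_sub (y i) (c i)
          have h4 : |y i| ≤ |y i - c i| + |c i - x i| + |x i| := by
            have e1 : y i = (y i - c i) + (c i - x i) + x i := by ring
            calc |y i| = |(y i - c i) + (c i - x i) + x i| := by rw [← e1]
              _ ≤ |y i - c i| + |c i - x i| + |x i| := by
                  refine le_trans (abs_add_le _ _) ?_
                  gcongr
                  exact abs_add_le _ _
          rw [abs_sub_comm (c i) (x i)] at h4
          linarith
        have : h + s ≤ T / 2 := by nlinarith
        linarith [this]
      calc (ENNReal.ofReal (h ^ n))⁻¹ * ∫⁻ y in zCube c h, g y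
          ≤ (ENNReal.ofReal (h ^ n))⁻¹ * ∫⁻ y in zCube 0 T, g y :=
            mul_le_mul_right (lintegral_mono_set hsub) _
        _ ≤ (ENNReal.ofReal ((6 * sn) ^ n) * (ENNReal.ofReal (T ^ n))⁻¹) * ∫⁻ y in zCube 0 T, g y := by
            gcongr
            rw [← ENNReal.ofReal_inv_of_pos (by positivity),
              ← ENNReal.ofReal_inv_of_pos (by positivity),
              ← ENNReal.ofReal_mul (by positivity)]
            apply ENNReal.ofReal_le_ofReal
            rw [← div_eq_mul_inv, le_div_iff₀ (by positivity : (0:ℝ) < T ^ n),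
              inv_mul_le_iff₀ (by positivity : (0:ℝ) < h ^ n), mul_comm ((h:ℝ) ^ n), ← mul_pow]
            exact pow_le_pow_left₀ hTpos.le (by nlinarith) n
        _ = ENNReal.ofReal ((6 * sn) ^ n) * ((ENNReal.ofReal (T ^ n))⁻¹ * ∫⁻ y in zCube 0 T, g y) := by
            rw [mul_assoc]
        _ ≤ ENNReal.ofReal ((6 * sn) ^ n) * (ENNReal.ofReal (T ^ (-lam)) * M) :=
            mul_le_mul_right (cube_avg_le_morrey lam hlam0 g hTpos) _
        _ ≤ ENNReal.ofReal ((6 * sn) ^ n) * (ENNReal.ofReal (κs ^ (-lam)) * M) :=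
            mul_le_mul_right (mul_le_mul_left (ENNReal.ofReal_le_ofReal
              (Real.rpow_le_rpow_of_nonpos hκpos hTκ (by linarith))) M)  _
    · -- small cube case
      push_neg at hcase
      set t := s / sn with ht
      have htpos : 0 < t := by positivity
      have hκt : κs ≤ t := by
        rw [hκs, ht]
        apply div_le_div_of_nonneg_left hs.le (by positivity)
        nlinarith
      have hupper : ∀ y ∈ zCube c h, g y ≤ ENNReal.ofReal (φ (s / 2)) := by
        intro y hy
        have hxy : ‖x - y‖ ≤ sn * h := by
          apply norm_le_of_coords _ h hh.le
          intro i
          have h1 : |y i - c i| ≤ h / 2 := hy i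
          have h2 : |x i - c i| ≤ h / 2 := hxQ' i
          have : (x - y) i = (x i - c i) - (y i - c i) := by
            show x i - y i = _
            ring
          rw [this]
          calc |(x i - c i) - (y i - c i)| ≤ |x i - c i| + |y i - c i| := abs_sub _ _
            _ ≤ h := by linarith
        have hy2 : s / 2 ≤ ‖y‖ := by
          have := norm_sub_norm_le x y
          have hsnh : sn * h < s / 2 := by nlinarith
          calc s / 2 = s - s / 2 := by ring
            _ ≤ s - sn * h := by linarith
            _ ≤ s - ‖x - y‖ := by linarith
            _ ≤ ‖y‖ := by
                have : ‖x‖ - ‖y‖ ≤ ‖x - y‖ := norm_sub_norm_le x y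
                linarith
        have hy0 : (0:ℝ) < ‖y‖ := lt_of_lt_of_le (by positivity) hy2
        rw [hg]
        simp only
        rw [hφeq y, abs_of_nonneg (hφnn _ hy0)]
        exact ENNReal.ofReal_le_ofReal (hφanti (mem_Ioi.2 (by positivity)) (mem_Ioi.2 hy0) hy2)
      have hub : (ENNReal.ofReal (h ^ n))⁻¹ * ∫⁻ y in zCube c h, g y
          ≤ ENNReal.ofReal (φ (s / 2)) := by
        have h1 : ∫⁻ y in zCube c h, g y ≤ ENNReal.ofReal (φ (s/2)) * ENNReal.ofReal (h ^ n) := by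
          calc ∫⁻ y in zCube c h, g y ≤ ∫⁻ _ in zCube c h, ENNReal.ofReal (φ (s/2)) :=
                setLIntegral_mono measurable_const hupper
            _ = ENNReal.ofReal (φ (s/2)) * volume (zCube c h) := setLIntegral_const _ _
            _ = ENNReal.ofReal (φ (s/2)) * ENNReal.ofReal (h ^ n) := by
                rw [volume_zCube c h hh.le]
        calc (ENNReal.ofReal (h ^ n))⁻¹ * ∫⁻ y in zCube c h, g y
            ≤ (ENNReal.ofReal (h ^ n))⁻¹ * (ENNReal.ofReal (φ (s/2)) * ENNReal.ofReal (h ^ n)) :=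
              mul_le_mul_right h1 _
          _ = ENNReal.ofReal (φ (s/2)) := by
              rw [mul_comm (ENNReal.ofReal (φ (s/2))), ← mul_assoc,
                ENNReal.inv_mul_cancel (by positivity) ENNReal.ofReal_ne_top, one_mul]
      have hlb : ENNReal.ofReal (φ (s / 2)) ≤ (ENNReal.ofReal (t ^ n))⁻¹ * ∫⁻ y in zCube 0 t, g y := by
        have hker : ∀ z ∈ zCube 0 t \ ({0}: Set (Rn n)), ENNReal.ofReal (φ (s/2)) ≤ g z := by
          rintro z ⟨hz, hz0⟩
          have hz0' : z ≠ 0 := by simpa using hz0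
          have hzn : 0 < ‖z‖ := norm_pos_iff.2 hz0'
          have hzle : ‖z‖ ≤ s / 2 := by
            have := norm_le_of_coords z (t/2) (by positivity) (fun i => by
              have := hz i
              simpa using this)
            calc ‖z‖ ≤ sn * (t/2) := this
              _ = s / 2 := by rw [ht]; field_simp
          rw [hg]; simp only
          rw [hφeq z]
          refine ENNReal.ofReal_le_ofReal ?_
          calc φ (s/2) ≤ φ ‖z‖ := hφanti (mem_Ioi.2 hzn) (mem_Ioi.2 (by positivity)) hzle
            _ ≤ |φ ‖z‖| := le_abs_self _
        have hvol : volume (zCube 0 t \ ({0}: Set (Rn n))) = ENNReal.ofReal (t ^ n) := by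
          rw [measure_diff_null (volume_singleton_zero hn), volume_zCube _ _ htpos.le]
        have h2 : ENNReal.ofReal (φ (s/2)) * ENNReal.ofReal (t ^ n) ≤ ∫⁻ y in zCube 0 t, g y := by
          calc ENNReal.ofReal (φ (s/2)) * ENNReal.ofReal (t ^ n)
              = ∫⁻ _ in zCube 0 t \ ({0}: Set (Rn n)), ENNReal.ofReal (φ (s/2)) := by
                rw [setLIntegral_const, hvol]
            _ ≤ ∫⁻ y in zCube 0 t \ ({0}: Set (Rn n)), g y := by
                apply setLIntegral_mono ?_ hker
                have hfm : Measurable f := by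
                  have : f = fun y => φ ‖y‖ := funext hφeq
                  rw [this]
                  exact hφm.comp measurable_norm
                exact (hfm.norm.ennreal_ofReal).comp measurable_id |>.comp measurable_id
            _ ≤ ∫⁻ y in zCube 0 t, g y := lintegral_mono_set diff_subset
        calc ENNReal.ofReal (φ (s/2))
            = (ENNReal.ofReal (t ^ n))⁻¹ * (ENNReal.ofReal (φ (s/2)) * ENNReal.ofReal (t ^ n)) := by
              rw [mul_comm (ENNReal.ofReal (φ (s/2))), ← mul_assoc,
                ENNReal.inv_mul_cancel (by positivity) ENNReal.ofReal_ne_top, one_mul]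
          _ ≤ (ENNReal.ofReal (t ^ n))⁻¹ * ∫⁻ y in zCube 0 t, g y := mul_le_mul_right h2 _
      have : ENNReal.ofReal (φ (s/2)) ≤ ENNReal.ofReal (κs ^ (-lam)) * M := by
        refine le_trans hlb ?_
        refine le_trans (cube_avg_le_morrey lam hlam0 g htpos) ?_
        exact mul_le_mul_left (ENNReal.ofReal_le_ofReal
          (Real.rpow_le_rpow_of_nonpos hκpos hκt (by linarith))) M
      refine le_trans hub (le_trans this ?_)
      have h1 : (1:ℝ≥0∞) ≤ ENNReal.ofReal ((6 * sn) ^ n) := by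
        rw [show (1:ℝ≥0∞) = ENNReal.ofReal 1 by simp]
        apply ENNReal.ofReal_le_ofReal
        have : (1:ℝ) ≤ 6 * sn := by nlinarith
        calc (1:ℝ) = 1 ^ n := (one_pow n).symm
          _ ≤ (6 * sn) ^ n := pow_le_pow_left₀ zero_le_one this n
      calc ENNReal.ofReal (κs ^ (-lam)) * M
          = 1 * (ENNReal.ofReal (κs ^ (-lam)) * M) := (one_mul _).symm
        _ ≤ ENNReal.ofReal ((6 * sn) ^ n) * (ENNReal.ofReal (κs ^ (-lam)) * M) :=
            mul_le_mul_left h1 _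
  refine le_trans key ?_
  rw [← mul_assoc, ← ENNReal.ofReal_mul (by positivity)]
  apply mul_le_mul_left
  apply ENNReal.ofReal_le_ofReal
  -- (6 sn)^n * κs^(-lam) ≤ (6sn)^n * (2 sn)^lam * s^(-lam), in fact equality
  have : κs ^ (-lam) = (2 * sn) ^ lam * s ^ (-lam) := by
    rw [Real.rpow_neg (le_of_lt hκpos), Real.rpow_neg hs.le, hκs,
      Real.div_rpow hs.le (by positivity), inv_div, div_eq_mul_inv]
  rw [this, mul_assoc]

lemma pow2_algebra (μ : ℝ) (n k : ℕ) (h : ℝ) :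
    ((2:ℝ)^(k+1))^μ * (2*(h*(2⁻¹:ℝ)^k))^n = 2^(μ+(n:ℝ)) * h^n * ((2:ℝ)^(μ-(n:ℝ)))^k := by
  have h2 : (0:ℝ) < 2 := two_pos
  have e1 : (((2:ℝ)^(k+1)):ℝ)^μ = (2:ℝ)^(((k:ℝ)+1) * μ) := by
    rw [← Real.rpow_natCast (2:ℝ) (k+1), ← Real.rpow_mul h2.le]
    push_cast; ring_nf
  have e2 : ((2⁻¹:ℝ)^k) = (2:ℝ)^(-(k:ℝ)) := by
    rw [inv_pow, ← Real.rpow_natCast (2:ℝ) k, ← Real.rpow_neg h2.le]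
  have e3 : ((2:ℝ)^(-(k:ℝ)))^n = (2:ℝ)^(-(k:ℝ)*(n:ℝ)) := by
    rw [← Real.rpow_natCast ((2:ℝ)^(-(k:ℝ))) n, ← Real.rpow_mul h2.le]
  have e4 : ((2:ℝ)^(μ-(n:ℝ)))^k = (2:ℝ)^((μ-(n:ℝ))*(k:ℝ)) := by
    rw [← Real.rpow_natCast ((2:ℝ)^(μ-(n:ℝ))) k, ← Real.rpow_mul h2.le]
  have e5 : ((2:ℝ):ℝ)^(n:ℕ) = (2:ℝ)^((n:ℕ):ℝ) := (Real.rpow_natCast 2 n).symm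
  rw [mul_pow, mul_pow, e1, e2, e3, e4, e5]
  calc (2:ℝ)^(((k:ℝ)+1) * μ) * ((2:ℝ)^((n:ℕ):ℝ) * (h^n * (2:ℝ)^(-(k:ℝ)*(n:ℝ))))
      = h^n * ((2:ℝ)^(((k:ℝ)+1) * μ) * (2:ℝ)^((n:ℕ):ℝ) * (2:ℝ)^(-(k:ℝ)*(n:ℝ))) := by ring
    _ = h^n * (2:ℝ)^(((k:ℝ)+1) * μ + ((n:ℕ):ℝ) + (-(k:ℝ)*(n:ℝ))) := by
        rw [← Real.rpow_add h2, ← Real.rpow_add h2]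
    _ = h^n * (2:ℝ)^((μ+(n:ℝ)) + (μ-(n:ℝ))*(k:ℝ)) := by
        congr 1
        push_cast; ring
    _ = _ := by rw [Real.rpow_add h2]; ring

lemma psi_le_mu {lam θ : ℝ} (hlam0 : 0 < lam) (hθ : 0 < θ) {t : ℝ} (ht : 1 ≤ t) :
    t^lam * (1 + lam * logPlus t) ≤ (1 + lam/θ) * t^(lam + θ) := by
  have ht0 : (0:ℝ) < t := lt_of_lt_of_le one_pos ht
  have hlog : logPlus t = Real.log t := max_eq_left (Real.log_nonneg ht)
  have h1 : Real.log t ≤ t^θ / θ := by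
    have h2 : Real.log (t^θ) = θ * Real.log t := Real.log_rpow ht0 θ
    have h3 : Real.log (t^θ) ≤ t^θ - 1 := Real.log_le_sub_one_of_pos (Real.rpow_pos_of_pos ht0 θ)
    have h4 : θ * Real.log t ≤ t^θ := by nlinarith [Real.rpow_pos_of_pos ht0 θ]
    rw [le_div_iff₀ hθ]; linarith [h4]
  have h5 : (1:ℝ) ≤ t^θ := by
    calc (1:ℝ) = t^(0:ℝ) := (Real.rpow_zero t).symm
      _ ≤ t^θ := Real.rpow_le_rpow_of_exponent_le ht hθ.le
  have h6 : 1 + lam * logPlus t ≤ (1 + lam/θ) * t^θ := by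
    rw [hlog]
    have := mul_le_mul_of_nonneg_left h1 hlam0.le
    calc 1 + lam * Real.log t ≤ t^θ + lam * (t^θ/θ) := by nlinarith
      _ = (1 + lam/θ) * t^θ := by ring
  calc t^lam * (1 + lam * logPlus t) ≤ t^lam * ((1 + lam/θ) * t^θ) := by
        apply mul_le_mul_of_nonneg_left h6 (Real.rpow_nonneg ht0.le lam)
    _ = (1 + lam/θ) * (t^lam * t^θ) := by ring
    _ = (1 + lam/θ) * t^(lam + θ) := by rw [← Real.rpow_add ht0]

def Ebound (n : ℕ) (lam : ℝ) : ℝ≥0∞ :=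
  1 + ENNReal.ofReal ((1 + lam/(((n:ℝ)-lam)/2)) * 2^(((lam+(n:ℝ))/2)+(n:ℝ)))
      * (1 - ENNReal.ofReal ((2:ℝ)^(((lam+(n:ℝ))/2)-(n:ℝ))))⁻¹

lemma Ebound_ne_top {n : ℕ} {lam : ℝ} (hlamn : lam < (n:ℝ)) : Ebound n lam ≠ ⊤ := by
  unfold Ebound
  have hr : ENNReal.ofReal ((2:ℝ)^(((lam+(n:ℝ))/2)-(n:ℝ))) < 1 := by
    rw [show (1:ℝ≥0∞) = ENNReal.ofReal 1 by simp]
    apply (ENNReal.ofReal_lt_ofReal_iff one_pos).2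
    exact Real.rpow_lt_one_of_one_lt_of_neg one_lt_two (by linarith)
  have : (1 - ENNReal.ofReal ((2:ℝ)^(((lam+(n:ℝ))/2)-(n:ℝ))))⁻¹ ≠ ⊤ := by
    rw [Ne, ENNReal.inv_eq_top, tsub_eq_zero_iff_le]
    exact not_le.2 hr
  exact ENNReal.add_ne_top.2 ⟨one_ne_top, ENNReal.mul_ne_top ENNReal.ofReal_ne_top this⟩

lemma psi_integral_bound {n : ℕ} (hn : 0 < n) {lam : ℝ} (hlam0 : 0 < lam) (hlamn : lam < (n:ℝ))
    (q : Rn n) {h : ℝ} (hh : 0 < h) :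
    ∫⁻ y in zCube q h, ENNReal.ofReal ((h/‖y‖)^lam * (1 + lam * logPlus (h/‖y‖)))
      ≤ Ebound n lam * ENNReal.ofReal (h ^ n) := by
  set θ := ((n:ℝ)-lam)/2 with hθdef
  have hθ : 0 < θ := by rw [hθdef]; linarith
  set μ := lam + θ with hμdef
  have hμn : μ - (n:ℝ) < 0 := by rw [hμdef, hθdef]; linarith
  have hμ0 : 0 < μ := by rw [hμdef]; linarith
  set Cθ := 1 + lam/θ with hCθ
  have hCθ1 : 1 ≤ Cθ := by
    rw [hCθ]
    have h0 : 0 ≤ lam/θ := by positivity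
    linarith
  set F : Rn n → ℝ≥0∞ := fun y => ENNReal.ofReal ((h/‖y‖)^lam * (1 + lam * logPlus (h/‖y‖)))
    with hF
  -- far bound
  have hfar : ∀ y : Rn n, h ≤ ‖y‖ → F y ≤ 1 := by
    intro y hy
    have hy0 : (0:ℝ) < ‖y‖ := lt_of_lt_of_le hh hy
    have h1 : h/‖y‖ ≤ 1 := (div_le_one hy0).2 hy
    have h2 : 0 ≤ h/‖y‖ := by positivity
    rw [hF]
    simp only
    rw [logPlus_of_le_one h2 h1, mul_zero, add_zero, mul_one]
    rw [show (1:ℝ≥0∞) = ENNReal.ofReal 1 by simp]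
    exact ENNReal.ofReal_le_ofReal (Real.rpow_le_one h2 h1 hlam0.le)
  -- near bound
  have hnear : ∀ y : Rn n, 0 < ‖y‖ → ‖y‖ ≤ h →
      F y ≤ ENNReal.ofReal (Cθ * (h/‖y‖)^μ) := by
    intro y hy0 hy
    have ht : 1 ≤ h/‖y‖ := (one_le_div hy0).2 hy
    rw [hF]; simp only
    exact ENNReal.ofReal_le_ofReal (by rw [hμdef]; exact psi_le_mu hlam0 hθ ht)
  -- annuli
  set A : ℕ → Set (Rn n) := fun k => {y | h * (2⁻¹:ℝ)^(k+1) < ‖y‖ ∧ ‖y‖ ≤ h * (2⁻¹:ℝ)^k}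
    with hA
  have hcover : {y : Rn n | ‖y‖ ≤ h} \ {0} ⊆ ⋃ k, A k := by
    rintro y ⟨hy1, hy2⟩
    have hy0 : 0 < ‖y‖ := norm_pos_iff.2 (by simpa using hy2)
    have hyh : ‖y‖ ≤ h := hy1
    -- find least k with h * 2⁻¹^(k+1) < ‖y‖
    have hex : ∃ k : ℕ, h * (2⁻¹:ℝ)^(k+1) < ‖y‖ := by
      obtain ⟨k, hk⟩ := exists_pow_lt_of_lt_one (show (0:ℝ) < ‖y‖/h by positivity)
        (show (2⁻¹:ℝ) < 1 by norm_num)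
      exact ⟨k, by
        have : (2⁻¹:ℝ)^(k+1) ≤ (2⁻¹:ℝ)^k := by
          apply pow_le_pow_of_le_one (by norm_num) (by norm_num)
          omega
        have h2 : h * (2⁻¹:ℝ)^(k+1) ≤ h * (2⁻¹:ℝ)^k := by nlinarith
        calc h * (2⁻¹:ℝ)^(k+1) ≤ h * (2⁻¹:ℝ)^k := h2
          _ < h * (‖y‖/h) := by nlinarith
          _ = ‖y‖ := by field_simp⟩
    classical
    have hk2 : ‖y‖ ≤ h * (2⁻¹:ℝ)^(Nat.find hex) := by
      rcases Nat.eq_zero_or_pos (Nat.find hex) with h0 | hpos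
      · rw [h0]; simpa using hyh
      · have hmin := Nat.find_min hex (show Nat.find hex - 1 < Nat.find hex by omega)
        push_neg at hmin
        have he : Nat.find hex - 1 + 1 = Nat.find hex := by omega
        rwa [he] at hmin
    exact mem_iUnion.2 ⟨Nat.find hex, Nat.find_spec hex, hk2⟩
  have hAsub : ∀ k, A k ⊆ zCube 0 (2*(h*(2⁻¹:ℝ)^k)) := by
    intro k y hy
    intro i
    have h1 : |y i| ≤ ‖y‖ := abs_coord_le_norm y i
    have h2 : ‖y‖ ≤ h * (2⁻¹:ℝ)^k := hy.2
    have h0 : (0 : Rn n) i = 0 := rfl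
    rw [h0, sub_zero]
    calc |y i| ≤ h * (2⁻¹:ℝ)^k := le_trans h1 h2
      _ = 2*(h*(2⁻¹:ℝ)^k)/2 := by ring
  have hAk : ∀ k, ∫⁻ y in A k, F y
      ≤ ENNReal.ofReal (Cθ * 2^(μ+(n:ℝ)) * h^n) * (ENNReal.ofReal ((2:ℝ)^(μ-(n:ℝ))))^k := by
    intro k
    have hbd : ∀ y ∈ A k, F y ≤ ENNReal.ofReal (Cθ * ((2:ℝ)^(k+1))^μ) := by
      intro y hy
      have hy0 : 0 < ‖y‖ := lt_of_le_of_lt (by positivity) hy.1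
      have hyh : ‖y‖ ≤ h := by
        calc ‖y‖ ≤ h * (2⁻¹:ℝ)^k := hy.2
          _ ≤ h * 1 := by
              apply mul_le_mul_of_nonneg_left _ hh.le
              apply pow_le_one₀ (by norm_num) (by norm_num)
          _ = h := mul_one h
      refine le_trans (hnear y hy0 hyh) (ENNReal.ofReal_le_ofReal ?_)
      apply mul_le_mul_of_nonneg_left _ (by linarith : (0:ℝ) ≤ Cθ)
      have hlt : h/‖y‖ ≤ (2:ℝ)^(k+1) := by
        rw [div_le_iff₀ hy0]
        have := hy.1
        have hpow : ((2:ℝ)^(k+1) : ℝ) * (h * (2⁻¹:ℝ)^(k+1)) = h := by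
          rw [inv_pow]
          field_simp
        nlinarith [this, pow_pos (show (0:ℝ) < 2 by norm_num) (k+1)]
      exact Real.rpow_le_rpow (by positivity) hlt hμ0.le
    calc ∫⁻ y in A k, F y ≤ ∫⁻ _ in A k, ENNReal.ofReal (Cθ * ((2:ℝ)^(k+1))^μ) :=
          setLIntegral_mono measurable_const hbd
      _ = ENNReal.ofReal (Cθ * ((2:ℝ)^(k+1))^μ) * volume (A k) := setLIntegral_const _ _
      _ ≤ ENNReal.ofReal (Cθ * ((2:ℝ)^(k+1))^μ) * ENNReal.ofReal ((2*(h*(2⁻¹:ℝ)^k))^n) := by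
          apply mul_le_mul_right
          rw [← volume_zCube (0 : Rn n) _ (by positivity)]
          exact measure_mono (hAsub k)
      _ = ENNReal.ofReal (Cθ * (((2:ℝ)^(k+1))^μ * (2*(h*(2⁻¹:ℝ)^k))^n)) := by
          rw [← ENNReal.ofReal_mul (by positivity), mul_assoc]
      _ = ENNReal.ofReal (Cθ * (2^(μ+(n:ℝ)) * h^n * ((2:ℝ)^(μ-(n:ℝ)))^k)) := by
          rw [pow2_algebra]
      _ = ENNReal.ofReal (Cθ * 2^(μ+(n:ℝ)) * h^n) * (ENNReal.ofReal ((2:ℝ)^(μ-(n:ℝ))))^k := by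
          rw [← ENNReal.ofReal_pow (by positivity), ← ENNReal.ofReal_mul (by positivity)]
          congr 1
          ring
  -- assemble
  have hsplit : zCube q h ⊆ ((zCube q h ∩ {y | h < ‖y‖}) ∪ ({y : Rn n | ‖y‖ ≤ h} \ {0})) ∪ ({0} : Set (Rn n)) := by
    intro y hy
    rcases le_or_gt ‖y‖ h with h1 | h1
    · by_cases h2 : y = 0
      · exact Or.inr (by simp [h2])
      · exact Or.inl (Or.inr ⟨h1, by simpa using h2⟩)
    · exact Or.inl (Or.inl ⟨hy, h1⟩)
  calc ∫⁻ y in zCube q h, F y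
      ≤ ∫⁻ y in ((zCube q h ∩ {y | h < ‖y‖}) ∪ ({y : Rn n | ‖y‖ ≤ h} \ {0})) ∪ ({0} : Set (Rn n)), F y :=
        lintegral_mono_set hsplit
    _ ≤ (∫⁻ y in (zCube q h ∩ {y | h < ‖y‖}) ∪ ({y : Rn n | ‖y‖ ≤ h} \ {0}), F y)
        + ∫⁻ y in ({0} : Set (Rn n)), F y := lintegral_union_le _ _ _
    _ ≤ ((∫⁻ y in zCube q h ∩ {y | h < ‖y‖}, F y) + ∫⁻ y in {y : Rn n | ‖y‖ ≤ h} \ {0}, F y) + 0 := by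
        gcongr
        · exact lintegral_union_le _ _ _
        · exact le_of_eq (setLIntegral_measure_zero _ _ (volume_singleton_zero hn))
    _ ≤ (ENNReal.ofReal (h^n) + ENNReal.ofReal (Cθ * 2^(μ+(n:ℝ)) * h^n)
          * (1 - ENNReal.ofReal ((2:ℝ)^(μ-(n:ℝ))))⁻¹) + 0 := by
        gcongr
        · -- far part
          calc ∫⁻ y in zCube q h ∩ {y | h < ‖y‖}, F y
              ≤ ∫⁻ _ in zCube q h ∩ {y | h < ‖y‖}, 1 :=
                setLIntegral_mono measurable_const (fun y hy => hfar y (le_of_lt hy.2))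
            _ = volume (zCube q h ∩ {y | h < ‖y‖}) := by rw [setLIntegral_const, one_mul]
            _ ≤ volume (zCube q h) := measure_mono inter_subset_left
            _ = ENNReal.ofReal (h^n) := volume_zCube q h hh.le
        · -- near part
          calc ∫⁻ y in {y : Rn n | ‖y‖ ≤ h} \ {0}, F y
              ≤ ∫⁻ y in ⋃ k, A k, F y := lintegral_mono_set hcover
            _ ≤ ∑' k, ∫⁻ y in A k, F y := lintegral_iUnion_le _ _
            _ ≤ ∑' k, ENNReal.ofReal (Cθ * 2^(μ+(n:ℝ)) * h^n) * (ENNReal.ofReal ((2:ℝ)^(μ-(n:ℝ))))^k :=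
                ENNReal.tsum_le_tsum hAk
            _ = ENNReal.ofReal (Cθ * 2^(μ+(n:ℝ)) * h^n) * ∑' k, (ENNReal.ofReal ((2:ℝ)^(μ-(n:ℝ))))^k :=
                ENNReal.tsum_mul_left
            _ = ENNReal.ofReal (Cθ * 2^(μ+(n:ℝ)) * h^n) * (1 - ENNReal.ofReal ((2:ℝ)^(μ-(n:ℝ))))⁻¹ := by
                rw [ENNReal.tsum_geometric]
    _ ≤ Ebound n lam * ENNReal.ofReal (h ^ n) := by
        rw [add_zero]
        unfold Ebound
        rw [add_mul (1:ℝ≥0∞) _ (ENNReal.ofReal (h^n)), one_mul (ENNReal.ofReal (h^n))]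
        have hμe : μ = (lam+(n:ℝ))/2 := by rw [hμdef, hθdef]; ring
        have hCe : Cθ = 1 + lam/(((n:ℝ)-lam)/2) := by rw [hCθ, hθdef]
        have hmain : ENNReal.ofReal (Cθ * 2^(μ+(n:ℝ)) * h^n) * (1 - ENNReal.ofReal ((2:ℝ)^(μ-(n:ℝ))))⁻¹
            = ENNReal.ofReal ((1 + lam/(((n:ℝ)-lam)/2)) * 2^(((lam+(n:ℝ))/2)+(n:ℝ)))
              * (1 - ENNReal.ofReal ((2:ℝ)^(((lam+(n:ℝ))/2)-(n:ℝ))))⁻¹ * ENNReal.ofReal (h^n) := by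
          calc ENNReal.ofReal (Cθ * 2^(μ+(n:ℝ)) * h^n) * (1 - ENNReal.ofReal ((2:ℝ)^(μ-(n:ℝ))))⁻¹
              = ENNReal.ofReal ((1 + lam/(((n:ℝ)-lam)/2)) * 2^(((lam+(n:ℝ))/2)+(n:ℝ)))
                * ENNReal.ofReal (h^n) * (1 - ENNReal.ofReal ((2:ℝ)^(((lam+(n:ℝ))/2)-(n:ℝ))))⁻¹ := by
                rw [← hCe, ← hμe, ENNReal.ofReal_mul (by positivity)]
            _ = ENNReal.ofReal ((1 + lam/(((n:ℝ)-lam)/2)) * 2^(((lam+(n:ℝ))/2)+(n:ℝ)))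
              * (1 - ENNReal.ofReal ((2:ℝ)^(((lam+(n:ℝ))/2)-(n:ℝ))))⁻¹ * ENNReal.ofReal (h^n) := by
              ring
        exact add_le_add le_rfl hmain.le

lemma percube {n : ℕ} (hn : 0 < n) {lam : ℝ} (hlam0 : 0 < lam) (hlamn : lam < (n:ℝ))
    (f : Rn n → ℝ) (hf : RadDec f) (hfin : zygMorrey lam f ≠ ⊤) (hpos : zygMorrey lam f ≠ 0)
    (q : Rn n) {h : ℝ} (hh : 0 < h) :
    zygAvgE (HLM f) q h ≤ ENNReal.ofReal
      (((Ebound n lam).toReal + 1) * ((6 * Real.sqrt n) ^ n * (2 * Real.sqrt n) ^ lam)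
        * (zygMorrey lam f).toReal * h ^ (-lam)) := by
  set A := (Ebound n lam).toReal + 1 with hA
  set B := (6 * Real.sqrt n) ^ n * (2 * Real.sqrt n) ^ lam with hB
  set Nr := (zygMorrey lam f).toReal with hNr
  have hsn : (0:ℝ) < Real.sqrt n := Real.sqrt_pos.2 (by exact_mod_cast hn)
  have hA1 : 1 ≤ A := by
    rw [hA]; have := ENNReal.toReal_nonneg (a := Ebound n lam); linarith
  have hApos : 0 < A := lt_of_lt_of_le one_pos hA1
  have hBpos : 0 < B := by rw [hB]; positivity
  have hNrpos : 0 < Nr := ENNReal.toReal_pos hpos hfin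
  set α := A * B * Nr * h ^ (-lam) with hα
  have hαpos : 0 < α := by
    rw [hα]; positivity
  apply zygAvgE_le hαpos
  -- main integral estimate
  have hI : ∫⁻ y in zCube q h, zygFnE (HLM f y / ENNReal.ofReal α) ≤ ENNReal.ofReal (h ^ n) := by
    have hae : ∀ᵐ y ∂(volume.restrict (zCube q h)),
        zygFnE (HLM f y / ENNReal.ofReal α)
          ≤ ENNReal.ofReal A⁻¹ * ENNReal.ofReal ((h/‖y‖)^lam * (1 + lam * logPlus (h/‖y‖))) := by
      have h0 : ∀ᵐ y : Rn n ∂volume, y ≠ 0 := by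
        rw [ae_iff]
        have : {y : Rn n | ¬ y ≠ 0} = {0} := by ext y; simp
        rw [this]; exact volume_singleton_zero hn
      filter_upwards [ae_restrict_of_ae h0] with y hy0
      have hyn : 0 < ‖y‖ := norm_pos_iff.2 hy0
      have h1 : HLM f y ≤ ENNReal.ofReal (B * Nr * ‖y‖ ^ (-lam)) := by
        refine le_trans (hlm_pointwise hn lam hlam0 f hf hy0) ?_
        rw [← ENNReal.ofReal_toReal hfin, ← hNr, ← hB, ← ENNReal.ofReal_mul (by positivity)]
        apply ENNReal.ofReal_le_ofReal
        rw [mul_comm (B * ‖y‖ ^ (-lam)) Nr]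
        ring_nf
        exact le_rfl
      have h2 : HLM f y / ENNReal.ofReal α ≤ ENNReal.ofReal (B * Nr * ‖y‖ ^ (-lam) / α) := by
        rw [ENNReal.ofReal_div_of_pos hαpos]
        exact ENNReal.div_le_div_right h1 _
      have hueq : B * Nr * ‖y‖ ^ (-lam) / α = A⁻¹ * (h/‖y‖) ^ lam := by
        rw [hα, Real.div_rpow hh.le (norm_nonneg y), Real.rpow_neg (norm_nonneg y),
          Real.rpow_neg hh.le]
        have hrl : (0:ℝ) < ‖y‖ ^ lam := Real.rpow_pos_of_pos hyn lam
        have hhl : (0:ℝ) < h ^ lam := Real.rpow_pos_of_pos hh lam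
        field_simp
      rw [hueq] at h2
      set v := (h/‖y‖) ^ lam with hv
      have hv0 : 0 ≤ v := Real.rpow_nonneg (by positivity) lam
      have huv : A⁻¹ * v ≤ v := by
        have : A⁻¹ ≤ 1 := by rw [inv_le_one₀ hApos]; exact hA1
        nlinarith
      calc zygFnE (HLM f y / ENNReal.ofReal α) ≤ zygFnE (ENNReal.ofReal (A⁻¹ * v)) :=
            zygFnE_mono h2
        _ = ENNReal.ofReal ((A⁻¹ * v) * (1 + logPlus (A⁻¹ * v))) := zygFnE_ofReal (by positivity)
        _ ≤ ENNReal.ofReal (A⁻¹ * (v * (1 + lam * logPlus (h/‖y‖)))) := by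
            apply ENNReal.ofReal_le_ofReal
            have hl1 : logPlus (A⁻¹ * v) ≤ logPlus v := logPlus_mono (by positivity) huv
            have hl2 : logPlus v = lam * logPlus (h/‖y‖) := by
              rw [hv]; exact logPlus_rpow (by positivity) hlam0
            calc (A⁻¹ * v) * (1 + logPlus (A⁻¹ * v)) ≤ (A⁻¹ * v) * (1 + logPlus v) := by
                  have h3 : (0:ℝ) ≤ A⁻¹ * v := by positivity
                  nlinarith [logPlus_nonneg (A⁻¹ * v)]
              _ = A⁻¹ * (v * (1 + lam * logPlus (h/‖y‖))) := by rw [hl2]; ring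
        _ = ENNReal.ofReal A⁻¹ * ENNReal.ofReal (v * (1 + lam * logPlus (h/‖y‖))) :=
            ENNReal.ofReal_mul (by positivity)
    calc ∫⁻ y in zCube q h, zygFnE (HLM f y / ENNReal.ofReal α)
        ≤ ∫⁻ y in zCube q h,
            ENNReal.ofReal A⁻¹ * ENNReal.ofReal ((h/‖y‖)^lam * (1 + lam * logPlus (h/‖y‖))) :=
          lintegral_mono_ae hae
      _ = ENNReal.ofReal A⁻¹ * ∫⁻ y in zCube q h,
            ENNReal.ofReal ((h/‖y‖)^lam * (1 + lam * logPlus (h/‖y‖))) :=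
          lintegral_const_mul' _ _ ENNReal.ofReal_ne_top
      _ ≤ ENNReal.ofReal A⁻¹ * (Ebound n lam * ENNReal.ofReal (h ^ n)) :=
          mul_le_mul_right (psi_integral_bound hn hlam0 hlamn q hh) _
      _ = (ENNReal.ofReal A⁻¹ * Ebound n lam) * ENNReal.ofReal (h ^ n) := by rw [mul_assoc]
      _ ≤ 1 * ENNReal.ofReal (h ^ n) := by
          apply mul_le_mul_left
          calc ENNReal.ofReal A⁻¹ * Ebound n lam
              = ENNReal.ofReal A⁻¹ * ENNReal.ofReal (Ebound n lam).toReal := by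
                rw [ENNReal.ofReal_toReal (Ebound_ne_top hlamn)]
            _ ≤ ENNReal.ofReal A⁻¹ * ENNReal.ofReal A :=
                mul_le_mul_right (ENNReal.ofReal_le_ofReal (by rw [hA]; linarith)) _
            _ = ENNReal.ofReal (A⁻¹ * A) := (ENNReal.ofReal_mul (by positivity)).symm
            _ = 1 := by rw [inv_mul_cancel₀ hApos.ne', ENNReal.ofReal_one]
      _ = ENNReal.ofReal (h ^ n) := one_mul _
  have hne0 : ENNReal.ofReal (h ^ n) ≠ 0 := by
    simp only [Ne, ENNReal.ofReal_eq_zero, not_le]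
    positivity
  calc (ENNReal.ofReal (h ^ n))⁻¹ * ∫⁻ y in zCube q h, zygFnE (HLM f y / ENNReal.ofReal α)
      ≤ (ENNReal.ofReal (h ^ n))⁻¹ * ENNReal.ofReal (h ^ n) := mul_le_mul_right hI _
    _ = 1 := ENNReal.inv_mul_cancel hne0 ENNReal.ofReal_ne_top

/-- Let `0 < λ < n`. The Hardy–Littlewood maximal operator is bounded on the
Zygmund–Morrey space `M_{L(1+log⁺L),λ}(ℝⁿ)` restricted to radially decreasing functions:
`‖Mf‖_{M_{L(1+log⁺L),λ}} ≤ c ‖f‖_{M_{L(1+log⁺L),λ}}`. -/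
theorem stmt14 (n : ℕ) (hn : 0 < n) (lam : ℝ) (hlam0 : 0 < lam) (hlamn : lam < (n : ℝ)) :
    ∃ c : ℝ, 0 < c ∧ ∀ f : Rn n → ℝ, RadDec f →
      zygMorreyE lam (HLM f) ≤ ENNReal.ofReal c * zygMorrey lam f := by
  have hsn : (0:ℝ) < Real.sqrt n := Real.sqrt_pos.2 (by exact_mod_cast hn)
  set A := (Ebound n lam).toReal + 1 with hA
  set B := (6 * Real.sqrt n) ^ n * (2 * Real.sqrt n) ^ lam with hB
  have hA1 : 1 ≤ A := by
    rw [hA]; have := ENNReal.toReal_nonneg (a := Ebound n lam); linarith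
  have hApos : 0 < A := lt_of_lt_of_le one_pos hA1
  have hBpos : 0 < B := by rw [hB]; positivity
  refine ⟨A * B, by positivity, ?_⟩
  intro f hf
  set N := zygMorrey lam f with hN
  by_cases hN0 : N = 0
  · -- trivial case f ≡ 0 a.e.
    have hHLM0 : ∀ x, HLM f x = 0 := by
      intro x
      apply le_antisymm _ zero_le
      apply iSup_le; intro c; apply iSup_le; intro h; apply iSup_le; intro hh
      apply iSup_le; intro _
      have h1 : ENNReal.ofReal (h^lam) * zygAvgE (fun y => ENNReal.ofReal |f y|) c h ≤ N :=
        le_iSup_of_le c (le_iSup_of_le h (le_iSup_of_le hh le_rfl))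
      rw [hN0] at h1
      have h2 : zygAvgE (fun y => ENNReal.ofReal |f y|) c h = 0 := by
        have := nonpos_iff_eq_zero.1 h1
        rcases mul_eq_zero.1 this with h3 | h3
        · exact absurd h3 (by simp only [Ne, ENNReal.ofReal_eq_zero, not_le]; positivity)
        · exact h3
      have h3 := avg_le_zygAvgE (fun y => ENNReal.ofReal |f y|) c hh
      rw [h2, nonpos_iff_eq_zero] at h3
      rcases mul_eq_zero.1 h3 with h4 | h4
      · exact absurd h4 (ENNReal.inv_ne_zero.2 ENNReal.ofReal_ne_top)
      · rw [h4, mul_zero]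
    have hz : ∀ (q : Rn n) (h : ℝ), zygAvgE (HLM f) q h = 0 := by
      intro q h
      apply le_antisymm _ zero_le
      apply ENNReal.le_of_forall_pos_le_add
      intro ε hε _
      rw [zero_add]
      have : zygAvgE (HLM f) q h ≤ ENNReal.ofReal (ε:ℝ) := by
        apply zygAvgE_le (by exact_mod_cast hε)
        have : ∀ y, zygFnE (HLM f y / ENNReal.ofReal (ε:ℝ)) = 0 := by
          intro y
          rw [hHLM0 y, ENNReal.zero_div]
          unfold zygFnE
          rw [zero_mul]
        simp only [this, lintegral_zero, mul_zero]
        exact zero_le_one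
      rwa [ENNReal.ofReal_coe_nnreal] at this
    apply iSup_le; intro q; apply iSup_le; intro h; apply iSup_le; intro hh
    rw [hz q h, mul_zero]
    exact zero_le
  by_cases hNtop : N = ⊤
  · have htop : ENNReal.ofReal (A * B) * N = ⊤ := by
      rw [hNtop]
      exact ENNReal.mul_top (by simp only [Ne, ENNReal.ofReal_eq_zero, not_le]; positivity)
    rw [htop]
    exact le_top
  -- main case
  apply iSup_le; intro q; apply iSup_le; intro h; apply iSup_le; intro hh
  have hNr : 0 < N.toReal := ENNReal.toReal_pos hN0 hNtop
  calc ENNReal.ofReal (h^lam) * zygAvgE (HLM f) q h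
      ≤ ENNReal.ofReal (h^lam) * ENNReal.ofReal (A * B * N.toReal * h ^ (-lam)) :=
        mul_le_mul_right (percube hn hlam0 hlamn f hf hNtop hN0 q hh) _
    _ = ENNReal.ofReal (h^lam * (A * B * N.toReal * h ^ (-lam))) :=
        (ENNReal.ofReal_mul (Real.rpow_nonneg hh.le lam)).symm
    _ = ENNReal.ofReal (A * B * N.toReal) := by
        congr 1
        have : h^lam * h^(-lam) = 1 := by
          rw [← Real.rpow_add hh]; simp
        calc h^lam * (A * B * N.toReal * h ^ (-lam)) = (A*B*N.toReal) * (h^lam * h^(-lam)) := by ring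
          _ = A * B * N.toReal := by rw [this, mul_one]
    _ = ENNReal.ofReal (A * B) * ENNReal.ofReal N.toReal := by
        rw [← ENNReal.ofReal_mul (by positivity)]
    _ = ENNReal.ofReal (A * B) * N := by rw [ENNReal.ofReal_toReal hNtop]

end
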